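/- Fix δ ∈ (0,1) and even n. Consider n/2 agents at position 0 and n/2 agents at position 1 on the real line, with alternatives at −1+δ and at 1. The panel of all agents at 0 selects the alternative at −1+δ (social cost (3/2 − δ)n), and the panel of all agents at 1 selects the alternative at 1 (social cost n/2). The selection algorithm returning each of these two panels with probability 1/2 is fair (each agent is on the panel with probability 1/2 = k/n for k = n/2), and its ex-ante distortion equals 2 − δ. -/
import Mathlib

lemma card_filter_lt_half (n : ℕ) (hn : 0 < n) :
    (Finset.univ.filter (fun i : Fin n => (i : ℕ) < n / 2)).card = n / 2 := by
  have h : n / 2 < n := Nat.div_lt_self hn one_lt_two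
  have : (Finset.univ.filter (fun i : Fin n => (i : ℕ) < n / 2))
      = Finset.Iio (⟨n / 2, h⟩ : Fin n) := by
    ext i; simp [Fin.lt_def]
  rw [this, Fin.card_Iio]

/-- On the real line with `n/2` agents at `0` and `n/2` agents at
`1` and alternatives at `−1+δ` and `1` (with `δ ∈ (0,1)`, `n` even and positive):
the panel of agents at `0` selects `−1+δ`, the panel of agents at `1` selects
`1`, the social costs are `(3/2 − δ)n` and `n/2`, the fifty-fifty mixture of the
two panels puts every agent on the panel with probability `1/2 = k/n` (fair for
`k = n/2`), and its ex-ante distortion equals `2 − δ`. -/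
theorem stmt_15 (n : ℕ) (hn : 0 < n) (heven : Even n)
    (δ : ℝ) (hδ0 : 0 < δ) (hδ1 : δ < 1)
    (pos : Fin n → ℝ) (hpos : ∀ i : Fin n, pos i = if (i : ℕ) < n / 2 then 0 else 1)
    (A B : Finset (Fin n))
    (hA : A = Finset.univ.filter (fun i : Fin n => (i : ℕ) < n / 2))
    (hB : B = Finset.univ.filter (fun i : Fin n => ¬ (i : ℕ) < n / 2)) :
    (∑ i ∈ A, |pos i - (-1 + δ)| ≤ ∑ i ∈ A, |pos i - 1|) ∧
    (∑ i ∈ B, |pos i - 1| ≤ ∑ i ∈ B, |pos i - (-1 + δ)|) ∧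
    (∑ i : Fin n, |pos i - (-1 + δ)| = (3 / 2 - δ) * n) ∧
    (∑ i : Fin n, |pos i - 1| = (n : ℝ) / 2) ∧
    (∀ i : Fin n,
      (if i ∈ A then (1 : ℝ) / 2 else 0) + (if i ∈ B then (1 : ℝ) / 2 else 0)
        = 1 / 2) ∧
    (((1 : ℝ) / 2 * ∑ i : Fin n, |pos i - (-1 + δ)| +
        (1 : ℝ) / 2 * ∑ i : Fin n, |pos i - 1|) /
      (min (∑ i : Fin n, |pos i - (-1 + δ)|) (∑ i : Fin n, |pos i - 1|)) = 2 - δ) := by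
  have hcardA : A.card = n / 2 := by rw [hA]; exact card_filter_lt_half n hn
  have hcardB : B.card = n / 2 := by
    rw [hB, Finset.filter_not, Finset.card_sdiff_of_subset (Finset.filter_subset _ _),
      Finset.card_univ, Fintype.card_fin, card_filter_lt_half n hn]
    have := Nat.div_mul_cancel heven.two_dvd
    omega
  have hhalf : ((n / 2 : ℕ) : ℝ) = (n : ℝ) / 2 := by
    rw [Nat.cast_div heven.two_dvd (by norm_num), Nat.cast_ofNat]
  have hposA : ∀ i ∈ A, pos i = 0 := by
    intro i hi; rw [hpos i, if_pos]; rw [hA] at hi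
    exact (Finset.mem_filter.mp hi).2
  have hposB : ∀ i ∈ B, pos i = 1 := by
    intro i hi; rw [hpos i, if_neg]; rw [hB] at hi
    exact (Finset.mem_filter.mp hi).2
  have hsumA1 : ∑ i ∈ A, |pos i - (-1 + δ)| = (n : ℝ) / 2 * (1 - δ) := by
    have key : ∀ i ∈ A, |pos i - (-1 + δ)| = 1 - δ := fun i hi => by
      rw [hposA i hi, show (0:ℝ) - (-1 + δ) = 1 - δ by ring]
      exact abs_of_nonneg (by linarith)
    rw [Finset.sum_congr rfl key]
    rw [Finset.sum_const, hcardA, nsmul_eq_mul, hhalf]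
    try ring
  have hsumA2 : ∑ i ∈ A, |pos i - 1| = (n : ℝ) / 2 := by
    have key : ∀ i ∈ A, |pos i - 1| = 1 := fun i hi => by
      rw [hposA i hi, show (0:ℝ) - 1 = -1 by ring, abs_neg, abs_one]
    rw [Finset.sum_congr rfl key]
    rw [Finset.sum_const, hcardA, nsmul_eq_mul, hhalf]
    try ring
  have hsumB1 : ∑ i ∈ B, |pos i - (-1 + δ)| = (n : ℝ) / 2 * (2 - δ) := by
    have key : ∀ i ∈ B, |pos i - (-1 + δ)| = 2 - δ := fun i hi => by
      rw [hposB i hi, show (1:ℝ) - (-1 + δ) = 2 - δ by ring]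
      exact abs_of_nonneg (by linarith)
    rw [Finset.sum_congr rfl key]
    rw [Finset.sum_const, hcardB, nsmul_eq_mul, hhalf]
    try ring
  have hsumB2 : ∑ i ∈ B, |pos i - 1| = 0 := by
    have key : ∀ i ∈ B, |pos i - 1| = 0 := fun i hi => by
      rw [hposB i hi]; simp
    rw [Finset.sum_congr rfl key]
    simp
  have hAB : Disjoint A B := by
    rw [hA, hB, Finset.filter_not]; exact Finset.disjoint_sdiff
  have hunion : A ∪ B = Finset.univ := by
    rw [hA, hB, Finset.filter_union_filter_not_eq]
  have hsplit : ∀ f : Fin n → ℝ, ∑ i : Fin n, f i = ∑ i ∈ A, f i + ∑ i ∈ B, f i := by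
    intro f; rw [← Finset.sum_union hAB, hunion]
  have ht1 : ∑ i : Fin n, |pos i - (-1 + δ)| = (3 / 2 - δ) * n := by
    rw [hsplit, hsumA1, hsumB1]; ring
  have ht2 : ∑ i : Fin n, |pos i - 1| = (n : ℝ) / 2 := by
    rw [hsplit, hsumA2, hsumB2]; ring
  have hnpos : (0 : ℝ) < n := by exact_mod_cast hn
  refine ⟨by rw [hsumA1, hsumA2]; nlinarith, by rw [hsumB1, hsumB2]; nlinarith,
    ht1, ht2, ?_, ?_⟩
  · intro i
    by_cases h : (i : ℕ) < n / 2
    · rw [if_pos (by rw [hA]; simpa using h),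
        if_neg (by rw [hB]; simp only [Finset.mem_filter, Finset.mem_univ,
          true_and, not_not]; exact h)]; ring
    · rw [if_neg (by rw [hA]; simpa using h),
        if_pos (by rw [hB]; simp only [Finset.mem_filter, Finset.mem_univ,
          true_and]; exact h)]; ring
  · rw [ht1, ht2, min_eq_right (by nlinarith)]
    field_simp
    ring
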